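/- Let A = ∫_{−∞}^{∞} exp(−f² − |1 − f|) df. Then (1/A) ∫_{−∞}^{∞} f · exp(−f² − |1 − f|) df − 1/2 = (e^{−3/4}/A) ∫_{1/2}^{∞} s · (e^{1−2s} − 1) · e^{−s²} ds. -/

import Mathlib

open MeasureTheory Real Set

lemma aux_g_int : Integrable (fun f : ℝ => Real.exp (-f ^ 2 - |1 - f|)) := by
  have h := integrable_exp_neg_mul_sq (b := 1) one_pos
  simp only [neg_mul, one_mul] at h
  refine h.mono ?_ ?_
  · exact (Continuous.rexp (by continuity)).aestronglyMeasurable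
  · filter_upwards with x
    rw [Real.norm_eq_abs, Real.norm_eq_abs, abs_of_pos (Real.exp_pos _),
      abs_of_pos (Real.exp_pos _)]
    apply Real.exp_le_exp.2
    have := abs_nonneg (1 - x)
    nlinarith [sq_abs x]

lemma aux_fg_int : Integrable (fun f : ℝ => f * Real.exp (-f ^ 2 - |1 - f|)) := by
  have h := (integrable_mul_exp_neg_mul_sq (b := 1) one_pos).abs
  simp only [neg_mul, one_mul] at h
  refine h.mono ?_ ?_
  · exact (continuous_id.mul (Continuous.rexp (by continuity))).aestronglyMeasurable
  · filter_upwards with x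
    rw [Real.norm_eq_abs, Real.norm_eq_abs, abs_abs, abs_mul, abs_mul,
      abs_of_pos (Real.exp_pos _), abs_of_pos (Real.exp_pos _)]
    apply mul_le_mul_of_nonneg_left _ (abs_nonneg x)
    apply Real.exp_le_exp.2
    have := abs_nonneg (1 - x)
    nlinarith [sq_abs x]

theorem minimum_variance_minus_map :
    (1 / (∫ f : ℝ, Real.exp (-f ^ 2 - |1 - f|))) *
        (∫ f : ℝ, f * Real.exp (-f ^ 2 - |1 - f|)) - 1 / 2
      = (Real.exp (-3 / 4) / (∫ f : ℝ, Real.exp (-f ^ 2 - |1 - f|))) *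
          ∫ s in Set.Ioi (1 / 2 : ℝ), s * (Real.exp (1 - 2 * s) - 1) * Real.exp (-s ^ 2) := by
  set A := ∫ f : ℝ, Real.exp (-f ^ 2 - |1 - f|) with hA
  have hApos : 0 < A := by
    rw [hA]
    refine (integral_pos_iff_support_of_nonneg (fun x => (Real.exp_pos _).le) aux_g_int).2 ?_
    have hsupp : (Function.support fun f : ℝ => Real.exp (-f ^ 2 - |1 - f|)) = Set.univ := by
      ext x; simp [Function.mem_support, Real.exp_ne_zero]
    rw [hsupp]
    simp
  have hAne : A ≠ 0 := ne_of_gt hApos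
  -- the key identity
  have key : (∫ f : ℝ, f * Real.exp (-f ^ 2 - |1 - f|)) - A / 2
      = Real.exp (-3 / 4) *
        ∫ s in Set.Ioi (1 / 2 : ℝ), s * (Real.exp (1 - 2 * s) - 1) * Real.exp (-s ^ 2) := by
    -- step 1: LHS = ∫ (f - 1/2) g
    have h1 : (∫ f : ℝ, f * Real.exp (-f ^ 2 - |1 - f|)) - A / 2
        = ∫ f : ℝ, (f - 1 / 2) * Real.exp (-f ^ 2 - |1 - f|) := by
      have hsub : (∫ f : ℝ, (f - 1 / 2) * Real.exp (-f ^ 2 - |1 - f|))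
          = (∫ f : ℝ, f * Real.exp (-f ^ 2 - |1 - f|))
            - ∫ f : ℝ, (1 / 2) * Real.exp (-f ^ 2 - |1 - f|) := by
        rw [← integral_sub aux_fg_int (aux_g_int.const_mul (1 / 2))]
        congr 1; funext x; ring
      rw [hsub, integral_const_mul, hA]
      ring
    -- step 2: change of variables f = s + 1/2
    have h2 : (∫ f : ℝ, (f - 1 / 2) * Real.exp (-f ^ 2 - |1 - f|))
        = ∫ s : ℝ, s * Real.exp (-(s + 1/2) ^ 2 - |1/2 - s|) := by
      rw [← integral_add_right_eq_self
        (fun f : ℝ => (f - 1 / 2) * Real.exp (-f ^ 2 - |1 - f|)) (1/2 : ℝ)]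
      congr 1
      funext s
      rw [show s + 1/2 - 1/2 = s by ring, show (1:ℝ) - (s + 1/2) = 1/2 - s by ring]
    set h : ℝ → ℝ := fun s => s * Real.exp (-(s + 1/2) ^ 2 - |1/2 - s|) with hh
    have hint : Integrable h := by
      have h0 : Integrable (fun f : ℝ => (f - 1 / 2) * Real.exp (-f ^ 2 - |1 - f|)) := by
        have := aux_fg_int.sub (aux_g_int.const_mul (1/2 : ℝ))
        refine this.congr ?_
        filter_upwards with x
        simp only [Pi.sub_apply]
        ring
      have := h0.comp_add_right (1/2 : ℝ)
      refine this.congr ?_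
      filter_upwards with x
      simp only [hh]
      rw [show x + 1/2 - 1/2 = x by ring, show (1:ℝ) - (x + 1/2) = 1/2 - x by ring]
    -- step 3: split ℝ
    have h3 : (∫ s : ℝ, h s) = (∫ s in Iic (0:ℝ), h s) + ∫ s in Ioi (0:ℝ), h s :=
      (intervalIntegral.integral_Iic_add_Ioi hint.integrableOn hint.integrableOn).symm
    have h4 : (∫ s in Iic (0:ℝ), h s) = ∫ s in Ioi (0:ℝ), h (-s) := by
      rw [integral_comp_neg_Ioi, neg_zero]
    have hintneg : Integrable (fun s => h (-s)) := hint.comp_neg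
    have h5 : (∫ s in Ioi (0:ℝ), h s) + (∫ s in Ioi (0:ℝ), h (-s))
        = ∫ s in Ioi (0:ℝ), (h s + h (-s)) :=
      (integral_add hint.integrableOn hintneg.integrableOn).symm
    -- step 4: split Ioi 0 into Ioc 0 (1/2) and Ioi (1/2)
    have hsplit : (∫ s in Ioi (0:ℝ), (h s + h (-s)))
        = (∫ s in Ioc (0:ℝ) (1/2), (h s + h (-s))) + ∫ s in Ioi (1/2:ℝ), (h s + h (-s)) := by
      have hadd : Integrable (fun s => h s + h (-s)) := hint.add hintneg
      have hI1 : IntegrableOn (fun s => h s + h (-s)) (Ioc (0:ℝ) (1/2)) volume :=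
        hadd.integrableOn
      have hI2 : IntegrableOn (fun s => h s + h (-s)) (Ioi (1/2:ℝ)) volume :=
        hadd.integrableOn
      have hdisj : Disjoint (Ioc (0:ℝ) (1/2)) (Ioi (1/2:ℝ)) :=
        Set.Ioc_disjoint_Ioi (le_refl (1/2:ℝ))
      have := setIntegral_union (μ := volume) (f := fun s => h s + h (-s))
        hdisj measurableSet_Ioi hI1 hI2
      rw [Ioc_union_Ioi_eq_Ioi (by norm_num : (0:ℝ) ≤ 1/2)] at this
      exact this
    have hzero : (∫ s in Ioc (0:ℝ) (1/2), (h s + h (-s))) = 0 := by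
      have he : EqOn (fun s => h s + h (-s)) (fun _ => (0:ℝ)) (Ioc (0:ℝ) (1/2)) := by
        intro s hs
        obtain ⟨hs0, hs2⟩ := hs
        simp only [hh]
        rw [abs_of_nonneg (by linarith : (0:ℝ) ≤ 1/2 - s),
          abs_of_nonneg (by linarith : (0:ℝ) ≤ 1/2 - -s),
          show -(s + 1/2)^2 - (1/2 - s) = -(-s + 1/2)^2 - (1/2 - -s) by ring]
        ring
      rw [setIntegral_congr_fun measurableSet_Ioc he, integral_zero]
    have hmain : (∫ s in Ioi (1/2:ℝ), (h s + h (-s)))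
        = Real.exp (-3 / 4) *
          ∫ s in Set.Ioi (1 / 2 : ℝ), s * (Real.exp (1 - 2 * s) - 1) * Real.exp (-s ^ 2) := by
      rw [← integral_const_mul]
      apply setIntegral_congr_fun measurableSet_Ioi
      intro s hs
      have hs' : (1/2:ℝ) < s := hs
      simp only [hh]
      rw [abs_of_nonpos (by linarith : 1/2 - s ≤ 0),
        abs_of_nonneg (by linarith : (0:ℝ) ≤ 1/2 - -s),
        show -(s + 1/2)^2 - -(1/2 - s) = (-3/4) + ((1 - 2*s) + -s^2) by ring,
        show -(-s + 1/2)^2 - (1/2 - -s) = (-3/4) + -s^2 by ring,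
        Real.exp_add, Real.exp_add, Real.exp_add]
      ring
    rw [h1, h2, h3, h4, add_comm, h5, hsplit, hzero, hmain, zero_add]
  have hstep : (1 / A) * (∫ f : ℝ, f * Real.exp (-f ^ 2 - |1 - f|)) - 1 / 2
      = ((∫ f : ℝ, f * Real.exp (-f ^ 2 - |1 - f|)) - A / 2) / A := by
    rw [eq_div_iff hAne]
    field_simp
  rw [hstep, key, mul_div_right_comm]
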